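/- Let Ω be a bounded measurable domain in hyperbolic space H^{n+1} and define Vol_w(Ω) = ∫_Ω cosh r dv and r_Ω by Vol(B(r_Ω)) = Vol(Ω), where B(r) is the geodesic ball of radius r centered at the origin. Then ∫_Ω cosh r dv ≥ (ω_n/(n+1)) sinh^{n+1}(r_Ω), with equality if and only if Ω = B(r_Ω) (up to measure zero). -/

import Mathlib

open Real MeasureTheory Set

/-- Hyperbolic space `H^{n+1}` in polar coordinates, modeled as `S × [0,∞)` where
`(S, σ)` stands for the unit sphere `S^n` with total area `ωn`; the hyperbolic volume
element is `sinh^n r dr dσ` and the weighted volume uses the weight `cosh r`. -/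
theorem stmt_8 {n : ℕ} {S : Type*} [MeasurableSpace S] (σ : Measure S)
    (ωn : ℝ) (hω : 0 < ωn) (hS : σ Set.univ = ENNReal.ofReal ωn)
    (Ω : Set (S × ℝ)) (hΩmeas : MeasurableSet Ω)
    (hΩsub : Ω ⊆ Set.univ ×ˢ Set.Ici (0 : ℝ))
    (Rmax : ℝ) (hbdd : Ω ⊆ Set.univ ×ˢ Set.Icc (0 : ℝ) Rmax)
    (rΩ : ℝ) (hrΩ : 0 ≤ rΩ)
    (hvol : ∫ x in Ω, Real.sinh x.2 ^ n ∂(σ.prod volume) =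
      ωn * ∫ t in (0:ℝ)..rΩ, Real.sinh t ^ n) :
    (ωn / (n + 1)) * Real.sinh rΩ ^ (n + 1) ≤
        ∫ x in Ω, Real.cosh x.2 * Real.sinh x.2 ^ n ∂(σ.prod volume) ∧
      ((∫ x in Ω, Real.cosh x.2 * Real.sinh x.2 ^ n ∂(σ.prod volume) =
          (ωn / (n + 1)) * Real.sinh rΩ ^ (n + 1)) ↔
        ((σ.prod volume).withDensity
            (fun x => ENNReal.ofReal (Real.sinh x.2 ^ n)))
          (symmDiff Ω (Set.univ ×ˢ Set.Ico (0 : ℝ) rΩ)) = 0) := by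
  have hσfin : IsFiniteMeasure σ := ⟨by rw [hS]; exact ENNReal.ofReal_lt_top⟩
  set μ := σ.prod (volume : Measure ℝ) with hμ
  set B : Set (S × ℝ) := Set.univ ×ˢ Set.Ico (0 : ℝ) rΩ with hB
  have hBmeas : MeasurableSet B := MeasurableSet.univ.prod measurableSet_Ico
  set M : ℝ := max Rmax rΩ with hM
  have hrM : rΩ ≤ M := le_max_right _ _
  -- the big box
  set K : Set (S × ℝ) := Set.univ ×ˢ Set.Icc (0 : ℝ) M with hK
  have hKmeas : MeasurableSet K := MeasurableSet.univ.prod measurableSet_Icc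
  have hΩK : Ω ⊆ K := fun x hx => by
    rcases hbdd hx with ⟨_, h2⟩
    exact ⟨trivial, h2.1, h2.2.trans (le_max_left _ _)⟩
  have hBK : B ⊆ K := fun x hx => by
    rcases hx with ⟨_, h2⟩
    exact ⟨trivial, h2.1, (le_of_lt h2.2).trans hrM⟩
  have hKfin : μ K ≠ ⊤ := by
    rw [hK, hμ, Measure.prod_prod, hS, Real.volume_Icc]
    exact ENNReal.mul_ne_top ENNReal.ofReal_ne_top ENNReal.ofReal_ne_top
  -- integrability of continuous functions of the second coordinate on subsets of K
  have hint : ∀ (f : ℝ → ℝ), Continuous f → ∀ (T : Set (S × ℝ)), T ⊆ K →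
      IntegrableOn (fun x : S × ℝ => f x.2) T μ := by
    intro f hf T hT
    refine IntegrableOn.mono_set ?_ hT
    obtain ⟨C, hC⟩ := (isCompact_Icc (a := (0:ℝ)) (b := M)).exists_bound_of_continuousOn
      hf.continuousOn
    refine Measure.integrableOn_of_bounded (M := C) hKfin
      ((hf.measurable.comp measurable_snd).aestronglyMeasurable) ?_
    filter_upwards [ae_restrict_mem hKmeas] with x hx
    exact hC x.2 hx.2
  -- Fubini for product sets
  have hfub : ∀ (f : ℝ → ℝ), ∫ x in B, f x.2 ∂μ
      = ωn * ∫ t in (0:ℝ)..rΩ, f t := by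
    intro f
    have hIco : ∫ t in Set.Ico (0:ℝ) rΩ, f t = ∫ t in (0:ℝ)..rΩ, f t := by
      rw [intervalIntegral.integral_of_le hrΩ,
        MeasureTheory.integral_Ico_eq_integral_Ioo' (measure_singleton 0),
        ← MeasureTheory.integral_Ioc_eq_integral_Ioo]
    rw [← hIco, hB, hμ, ← Measure.prod_restrict, Measure.restrict_univ]
    have : ∫ x : S × ℝ, f x.2 ∂(σ.prod (volume.restrict (Set.Ico 0 rΩ)))
        = ∫ z : S × ℝ, (fun _ : S => (1:ℝ)) z.1 * f z.2
            ∂(σ.prod (volume.restrict (Set.Ico 0 rΩ))) := by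
      simp
    rw [this, MeasureTheory.integral_prod_mul (L := ℝ) (fun _ : S => (1:ℝ)) f,
      integral_const, measureReal_def, hS, ENNReal.toReal_ofReal hω.le, smul_eq_mul, mul_one]
  -- functions
  set g : S × ℝ → ℝ := fun x => Real.cosh x.2 * Real.sinh x.2 ^ n with hg
  set h : S × ℝ → ℝ := fun x => Real.sinh x.2 ^ n with hh
  have hgc : Continuous (fun t : ℝ => Real.cosh t * Real.sinh t ^ n) :=
    Real.continuous_cosh.mul (Real.continuous_sinh.pow n)
  have hhc : Continuous (fun t : ℝ => Real.sinh t ^ n) := Real.continuous_sinh.pow n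
  -- value of the ball integrals
  have hJB : ∫ x in B, h x ∂μ = ωn * ∫ t in (0:ℝ)..rΩ, Real.sinh t ^ n :=
    hfub (fun t => Real.sinh t ^ n)
  have hIB : ∫ x in B, g x ∂μ = (ωn / (n + 1)) * Real.sinh rΩ ^ (n + 1) := by
    have h0 : ∫ x in B, g x ∂μ = ωn * ∫ t in (0:ℝ)..rΩ, Real.cosh t * Real.sinh t ^ n :=
      hfub (fun t => Real.cosh t * Real.sinh t ^ n)
    rw [h0]
    have hderiv : ∀ t ∈ Set.uIcc (0:ℝ) rΩ,
        HasDerivAt (fun t => Real.sinh t ^ (n+1) / (n+1))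
          (Real.cosh t * Real.sinh t ^ n) t := by
      intro t _
      have h1 : HasDerivAt Real.sinh (Real.cosh t) t := Real.hasDerivAt_sinh t
      have h2 := (h1.pow (n+1)).div_const ((n:ℝ)+1)
      refine h2.congr_deriv ?_
      rw [Nat.add_sub_cancel]; push_cast
      field_simp
    rw [intervalIntegral.integral_eq_sub_of_hasDerivAt hderiv
      (hgc.intervalIntegrable _ _)]
    simp [Real.sinh_zero]
    ring
  -- volume equality
  have hJeq : ∫ x in Ω, h x ∂μ = ∫ x in B, h x ∂μ := by rw [hJB]; exact hvol
  -- integrability facts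
  have hintΩg : IntegrableOn g Ω μ := hint _ hgc _ hΩK
  have hintΩh : IntegrableOn h Ω μ := hint _ hhc _ hΩK
  have hintBg : IntegrableOn g B μ := hint _ hgc _ hBK
  have hintBh : IntegrableOn h B μ := hint _ hhc _ hBK
  -- decompositions
  have hdecomp : ∀ (f : S × ℝ → ℝ), IntegrableOn f Ω μ → IntegrableOn f B μ →
      (∫ x in Ω, f x ∂μ) - ∫ x in B, f x ∂μ
        = (∫ x in Ω \ B, f x ∂μ) - ∫ x in B \ Ω, f x ∂μ := by
    intro f hfΩ hfB
    have h1 := integral_inter_add_diff (μ := μ) (s := Ω) (f := f) hBmeas hfΩ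
    have h2 := integral_inter_add_diff (μ := μ) (s := B) (f := f) hΩmeas hfB
    rw [Set.inter_comm] at h2
    linarith
  have hJd := hdecomp h hintΩh hintBh
  have hId := hdecomp g hintΩg hintBg
  rw [hJeq, sub_self] at hJd
  -- J(Ω\B) = J(B\Ω)
  have hJs : ∫ x in Ω \ B, h x ∂μ = ∫ x in B \ Ω, h x ∂μ := by linarith
  -- pointwise bound on Ω \ B : x.2 ≥ rΩ
  have hΩBge : ∀ x ∈ Ω \ B, rΩ ≤ x.2 := by
    rintro x ⟨hx1, hx2⟩
    by_contra hlt
    push_neg at hlt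
    exact hx2 ⟨trivial, (hΩsub hx1).2, hlt⟩
  have hBΩlt : ∀ x ∈ B \ Ω, 0 ≤ x.2 ∧ x.2 < rΩ := fun x hx => hx.1.2
  -- A and C
  set pA : S × ℝ → ℝ := fun x => (Real.cosh x.2 - Real.cosh rΩ) * Real.sinh x.2 ^ n with hpA
  set pC : S × ℝ → ℝ := fun x => (Real.cosh rΩ - Real.cosh x.2) * Real.sinh x.2 ^ n with hpC
  have hintA : IntegrableOn pA (Ω \ B) μ :=
    hint (fun t => (Real.cosh t - Real.cosh rΩ) * Real.sinh t ^ n)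
      ((Real.continuous_cosh.sub continuous_const).mul (Real.continuous_sinh.pow n))
      _ (fun x hx => hΩK hx.1)
  have hintC : IntegrableOn pC (B \ Ω) μ :=
    hint (fun t => (Real.cosh rΩ - Real.cosh t) * Real.sinh t ^ n)
      ((continuous_const.sub Real.continuous_cosh).mul (Real.continuous_sinh.pow n))
      _ (fun x hx => hBK hx.1)
  have hpAnn : ∀ x ∈ Ω \ B, 0 ≤ pA x := by
    intro x hx
    have h1 : Real.cosh rΩ ≤ Real.cosh x.2 := by
      rw [Real.cosh_le_cosh, abs_of_nonneg hrΩ, abs_of_nonneg ((hΩsub hx.1).2)]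
      exact hΩBge x hx
    have h2 : 0 ≤ Real.sinh x.2 := Real.sinh_nonneg_iff.2 (hΩsub hx.1).2
    exact mul_nonneg (by linarith) (pow_nonneg h2 n)
  have hpCnn : ∀ x ∈ B \ Ω, 0 ≤ pC x := by
    intro x hx
    obtain ⟨h0, hlt⟩ := hBΩlt x hx
    have h1 : Real.cosh x.2 ≤ Real.cosh rΩ := by
      rw [Real.cosh_le_cosh, abs_of_nonneg hrΩ, abs_of_nonneg h0]
      exact hlt.le
    exact mul_nonneg (by linarith) (pow_nonneg (Real.sinh_nonneg_iff.2 h0) n)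
  -- A,C values
  have hintΩBg : IntegrableOn g (Ω \ B) μ := hintΩg.mono_set diff_subset
  have hintΩBh : IntegrableOn h (Ω \ B) μ := hintΩh.mono_set diff_subset
  have hintBΩg : IntegrableOn g (B \ Ω) μ := hintBg.mono_set diff_subset
  have hintBΩh : IntegrableOn h (B \ Ω) μ := hintBh.mono_set diff_subset
  have hAval : ∫ x in Ω \ B, pA x ∂μ
      = (∫ x in Ω \ B, g x ∂μ) - Real.cosh rΩ * ∫ x in Ω \ B, h x ∂μ := by
    rw [← MeasureTheory.integral_const_mul, ← integral_sub hintΩBg (hintΩBh.const_mul (Real.cosh rΩ))]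
    congr 1 with x
    simp only [hpA, hg, hh]
    ring
  have hCval : ∫ x in B \ Ω, pC x ∂μ
      = Real.cosh rΩ * (∫ x in B \ Ω, h x ∂μ) - ∫ x in B \ Ω, g x ∂μ := by
    rw [← MeasureTheory.integral_const_mul, ← integral_sub (hintBΩh.const_mul (Real.cosh rΩ)) hintBΩg]
    congr 1 with x
    simp only [hpC, hg, hh]
    ring
  have hAnn : 0 ≤ ∫ x in Ω \ B, pA x ∂μ :=
    setIntegral_nonneg (hΩmeas.diff hBmeas) hpAnn
  have hCnn : 0 ≤ ∫ x in B \ Ω, pC x ∂μ :=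
    setIntegral_nonneg (hBmeas.diff hΩmeas) hpCnn
  have hACsum : (∫ x in Ω, g x ∂μ) - ∫ x in B, g x ∂μ
      = (∫ x in Ω \ B, pA x ∂μ) + ∫ x in B \ Ω, pC x ∂μ := by
    rw [hAval, hCval, hId, hJs]; ring
  have hineq : (ωn / (n + 1)) * Real.sinh rΩ ^ (n + 1) ≤ ∫ x in Ω, g x ∂μ := by
    rw [← hIB]; nlinarith [hACsum]
  constructor
  · exact hineq
  constructor
  · -- equality → symmDiff null
    intro heq
    have hsum0 : (∫ x in Ω \ B, pA x ∂μ) + ∫ x in B \ Ω, pC x ∂μ = 0 := by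
      rw [← hACsum, hIB, heq, sub_self]
    have hA0 : ∫ x in Ω \ B, pA x ∂μ = 0 := by linarith
    have hC0 : ∫ x in B \ Ω, pC x ∂μ = 0 := by linarith
    -- handle Ω \ B : μ (Ω \ B) = 0
    have hAae : pA =ᵐ[μ.restrict (Ω \ B)] 0 := by
      rw [← integral_eq_zero_iff_of_nonneg_ae ?_ hintA]
      · exact hA0
      · filter_upwards [ae_restrict_mem (hΩmeas.diff hBmeas)] with x hx
        exact hpAnn x hx
    have hNnull : μ ((Set.univ : Set S) ×ˢ ({rΩ} : Set ℝ)) = 0 := by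
      rw [hμ, Measure.prod_prod, Real.volume_singleton, mul_zero]
    have hμΩB : μ (Ω \ B) = 0 := by
      have hNae : ∀ᵐ x ∂(μ.restrict (Ω \ B)), x ∉ (Set.univ : Set S) ×ˢ ({rΩ} : Set ℝ) := by
        refine ae_restrict_of_ae ?_
        rw [ae_iff]
        convert hNnull using 2; ext x; simp
      have : ∀ᵐ x ∂(μ.restrict (Ω \ B)), False := by
        filter_upwards [hAae, ae_restrict_mem (hΩmeas.diff hBmeas), hNae] with x hx1 hx2 hx3
        have hge : rΩ ≤ x.2 := hΩBge x hx2
        have hne : x.2 ≠ rΩ := fun hcon => hx3 ⟨trivial, hcon⟩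
        have hgt : rΩ < x.2 := lt_of_le_of_ne hge (Ne.symm hne)
        have h1 : Real.cosh rΩ < Real.cosh x.2 := by
          rw [Real.cosh_lt_cosh, abs_of_nonneg hrΩ, abs_of_nonneg (hrΩ.trans hge)]
          exact hgt
        have h2 : 0 < Real.sinh x.2 := Real.sinh_pos_iff.2 (lt_of_le_of_lt hrΩ hgt)
        have : 0 < pA x := mul_pos (by linarith) (pow_pos h2 n)
        rw [hx1] at this
        exact lt_irrefl _ this
      have := ae_iff.1 this
      simpa [Measure.restrict_apply_univ] using this
    -- handle B \ Ω : h vanishes a.e.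
    have hCae : pC =ᵐ[μ.restrict (B \ Ω)] 0 := by
      rw [← integral_eq_zero_iff_of_nonneg_ae ?_ hintC]
      · exact hC0
      · filter_upwards [ae_restrict_mem (hBmeas.diff hΩmeas)] with x hx
        exact hpCnn x hx
    have hhae : ∀ᵐ x ∂(μ.restrict (B \ Ω)), Real.sinh x.2 ^ n = 0 := by
      filter_upwards [hCae, ae_restrict_mem (hBmeas.diff hΩmeas)] with x hx1 hx2
      obtain ⟨h0, hlt⟩ := hBΩlt x hx2
      have h1 : Real.cosh x.2 < Real.cosh rΩ := by
        rw [Real.cosh_lt_cosh, abs_of_nonneg hrΩ, abs_of_nonneg h0]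
        exact hlt
      have : (Real.cosh rΩ - Real.cosh x.2) * Real.sinh x.2 ^ n = 0 := hx1
      rcases mul_eq_zero.1 this with hc | hs
      · linarith
      · exact hs
    set ν := μ.withDensity (fun x => ENNReal.ofReal (Real.sinh x.2 ^ n)) with hν
    have hν1 : ν (Ω \ B) = 0 :=
      (withDensity_absolutelyContinuous μ _) hμΩB
    have hν2 : ν (B \ Ω) = 0 := by
      rw [hν, withDensity_apply _ (hBmeas.diff hΩmeas)]
      have hz : (fun x : S × ℝ => ENNReal.ofReal (Real.sinh x.2 ^ n))
          =ᵐ[μ.restrict (B \ Ω)] 0 := by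
        filter_upwards [hhae] with x hx
        simp [hx]
      rw [lintegral_congr_ae hz]
      simp
    have : symmDiff Ω B = (Ω \ B) ∪ (B \ Ω) := Set.symmDiff_def Ω B
    rw [this]
    exact measure_union_null hν1 hν2
  · -- symmDiff null → equality
    intro hnull
    set ν := μ.withDensity (fun x => ENNReal.ofReal (Real.sinh x.2 ^ n)) with hν
    have hsd : symmDiff Ω B = (Ω \ B) ∪ (B \ Ω) := Set.symmDiff_def Ω B
    have hν1 : ν (Ω \ B) = 0 :=
      measure_mono_null (hsd ▸ Set.subset_union_left) hnull
    have hν2 : ν (B \ Ω) = 0 :=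
      measure_mono_null (hsd ▸ Set.subset_union_right) hnull
    have hmf : Measurable (fun x : S × ℝ => ENNReal.ofReal (Real.sinh x.2 ^ n)) :=
      ENNReal.measurable_ofReal.comp ((Real.continuous_sinh.pow n).measurable.comp
        measurable_snd)
    have hkey : ∀ (T : Set (S × ℝ)), MeasurableSet T → ν T = 0 →
        (∀ x ∈ T, 0 ≤ x.2) →
        (∀ᵐ x ∂(μ.restrict T), Real.sinh x.2 ^ n = 0) := by
      intro T hTm hT0 hTnn
      rw [hν, withDensity_apply _ hTm] at hT0
      have := (setLIntegral_eq_zero_iff hTm hmf).1 hT0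
      filter_upwards [ae_restrict_of_ae this, ae_restrict_mem hTm] with x hx1 hx2
      have hle : Real.sinh x.2 ^ n ≤ 0 := by
        have : ENNReal.ofReal (Real.sinh x.2 ^ n) = 0 := hx1 hx2
        exact ENNReal.ofReal_eq_zero.1 this
      have hge : 0 ≤ Real.sinh x.2 ^ n :=
        pow_nonneg (Real.sinh_nonneg_iff.2 (hTnn x hx2)) n
      linarith
    have hz1 := hkey (Ω \ B) (hΩmeas.diff hBmeas) hν1
      (fun x hx => (hΩsub hx.1).2)
    have hz2 := hkey (B \ Ω) (hBmeas.diff hΩmeas) hν2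
      (fun x hx => hx.1.2.1)
    have hA0 : ∫ x in Ω \ B, pA x ∂μ = 0 := by
      have : ∫ x in Ω \ B, pA x ∂μ = ∫ x in Ω \ B, (0:ℝ) ∂μ := by
        refine integral_congr_ae ?_
        filter_upwards [hz1] with x hx
        simp [hpA, hx]
      simpa using this
    have hC0 : ∫ x in B \ Ω, pC x ∂μ = 0 := by
      have : ∫ x in B \ Ω, pC x ∂μ = ∫ x in B \ Ω, (0:ℝ) ∂μ := by
        refine integral_congr_ae ?_
        filter_upwards [hz2] with x hx
        simp [hpC, hx]
      simpa using this
    rw [← hIB]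
    have : (∫ x in Ω, g x ∂μ) - ∫ x in B, g x ∂μ = 0 := by
      rw [hACsum, hA0, hC0, add_zero]
    linarith
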